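/- arXiv:1811.00353 — 2 statements merged into one kernel-verified Lean document; each statement's English description precedes it below -/
import Mathlib

section
/- Let (F, ‖·‖) be a real normed space, (a_{ij})_{i,j≤n} a symmetric matrix with entries in F, g₁,…,g_n i.i.d. standard Gaussian N(0,1) random variables, and p ≥ 1. Set W = ‖Σ_{i≠j} a_{ij} g_i g_j‖_p + ‖Σ_i a_{ii}(g_i² − 1)‖_p. Then (1/3)·W ≤ ‖Σ_{ij} a_{ij}(g_i g_j − δ_{ij})‖_p ≤ W. -/
open MeasureTheory ProbabilityTheory Finset Real

namespace Stmt14Aux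

open Set
open scoped ENNReal NNReal

lemma integrable_abs_rpow_mul_exp {s : ℝ} (hs : 0 ≤ s) :
    Integrable fun x : ℝ => |x| ^ s * rexp (-(2⁻¹ : ℝ) * x ^ 2) := by
  have hb : (0:ℝ) < 2⁻¹ := by norm_num
  have hs' : (-1 : ℝ) < s := by linarith
  have h1 : IntegrableOn (fun x : ℝ => |x| ^ s * rexp (-(2⁻¹:ℝ) * x ^ 2)) (Ioi 0) := by
    refine (integrableOn_rpow_mul_exp_neg_mul_sq hb hs').congr_fun ?_ measurableSet_Ioi
    intro x hx
    simp only [abs_of_pos (α := ℝ) hx]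
  have h2 : IntegrableOn (fun x : ℝ => |x| ^ s * rexp (-(2⁻¹:ℝ) * x ^ 2)) (Iio 0) := by
    rw [← (Measure.measurePreserving_neg (volume : Measure ℝ)).integrableOn_comp_preimage
        (Homeomorph.neg ℝ).measurableEmbedding]
    simp only [Function.comp_def, abs_neg, neg_sq, neg_preimage, neg_Iio, neg_neg, neg_zero]
    exact h1
  rw [← integrableOn_univ, ← @Iio_union_Ici _ _ (0 : ℝ), integrableOn_union,
    integrableOn_Ici_iff_integrableOn_Ioi]
  exact ⟨h2, h1⟩

lemma memℒp_id_gaussian {r : ℝ≥0∞} (hr0 : r ≠ 0) (hr : r ≠ ∞) :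
    MemLp id r (gaussianReal 0 1) := by
  refine ⟨measurable_id.aestronglyMeasurable, ?_⟩
  rw [eLpNorm_eq_lintegral_rpow_enorm_toReal hr0 hr]
  refine ENNReal.rpow_lt_top_of_nonneg (by positivity) ?_
  rw [gaussianReal_of_var_ne_zero 0 one_ne_zero,
    lintegral_withDensity_eq_lintegral_mul _ (measurable_gaussianPDF 0 1)
      ((measurable_id.enorm).pow_const _)]
  have hbound : ∀ x : ℝ, gaussianPDF 0 1 x * (‖x‖₊ : ℝ≥0∞) ^ r.toReal
      ≤ ENNReal.ofReal ((Real.sqrt (2 * π))⁻¹ * (|x| ^ r.toReal * rexp (-(2⁻¹:ℝ) * x ^ 2))) := by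
    intro x
    rw [gaussianPDF]
    have h1 : ((‖x‖₊ : ℝ≥0∞)) ^ r.toReal = ENNReal.ofReal (|x| ^ r.toReal) := by
      rw [← ENNReal.ofReal_rpow_of_nonneg (abs_nonneg x) ENNReal.toReal_nonneg,
        ← Real.enorm_eq_ofReal_abs]
      rfl
    rw [h1, ← ENNReal.ofReal_mul (gaussianPDFReal_nonneg _ _ _)]
    apply ENNReal.ofReal_le_ofReal
    rw [gaussianPDFReal]
    have : -(x - 0) ^ 2 / (2 * (1:ℝ≥0)) = -(2⁻¹:ℝ) * x ^ 2 := by push_cast; ring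
    rw [this]
    have : ((Real.sqrt (2 * π * (1:ℝ≥0)))⁻¹ : ℝ) = (Real.sqrt (2 * π))⁻¹ := by push_cast; ring_nf
    rw [this]
    apply le_of_eq
    ring
  have main : ∫⁻ x, gaussianPDF 0 1 x * (‖x‖₊ : ℝ≥0∞) ^ r.toReal < ∞ := by
    calc ∫⁻ x, gaussianPDF 0 1 x * (‖x‖₊ : ℝ≥0∞) ^ r.toReal
        ≤ ∫⁻ x, ENNReal.ofReal ((Real.sqrt (2 * π))⁻¹ * (|x| ^ r.toReal * rexp (-(2⁻¹:ℝ) * x ^ 2))) := lintegral_mono hbound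
      _ < ∞ := (((integrable_abs_rpow_mul_exp ENNReal.toReal_nonneg).const_mul _)).lintegral_lt_top
  exact ne_of_lt (lt_of_le_of_lt (le_of_eq (by rfl)) main)

variable {n : ℕ} {Ω : Type*} [MeasurableSpace Ω] {P : Measure Ω} [IsProbabilityMeasure P]

lemma map_pi_eq (g : Fin n → Ω → ℝ) (hmeas : ∀ i, Measurable (g i))
    (hindep : iIndepFun g P)
    (hlaw : ∀ i, Measure.map (g i) P = gaussianReal 0 1) :
    Measure.map (fun ω i => g i ω) P = Measure.pi (fun _ => gaussianReal 0 1) := by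
  refine (Measure.pi_eq fun s hs => ?_).symm
  rw [Measure.map_apply (measurable_pi_lambda _ fun i => hmeas i) (MeasurableSet.univ_pi hs)]
  have hpre : (fun ω i => g i ω) ⁻¹' (Set.pi Set.univ s) = ⋂ i, g i ⁻¹' s i := by
    ext ω; simp [Set.mem_pi]
  rw [hpre, hindep.meas_iInter fun i => ⟨s i, hs i, rfl⟩]
  exact Finset.prod_congr rfl fun i _ => by rw [← hlaw i, Measure.map_apply (hmeas i) (hs i)]

lemma map_pi_eq_signed (g : Fin n → Ω → ℝ) (hmeas : ∀ i, Measurable (g i))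
    (hindep : iIndepFun g P)
    (hlaw : ∀ i, Measure.map (g i) P = gaussianReal 0 1)
    (c : Fin n → ℝ) (hc : ∀ i, c i = 1 ∨ c i = -1) :
    Measure.map (fun ω i => c i * g i ω) P = Measure.pi (fun _ => gaussianReal 0 1) := by
  refine map_pi_eq (fun i ω => c i * g i ω) (fun i => (hmeas i).const_mul _) ?_ ?_
  · exact hindep.comp (fun i => (c i * ·)) (fun i => measurable_const_mul _)
  · intro i
    show Measure.map ((c i * ·) ∘ g i) P = _
    rw [← Measure.map_map (measurable_const_mul _) (hmeas i), hlaw i,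
      gaussianReal_map_const_mul]
    have h2 : c i ^ 2 = 1 := by rcases hc i with h | h <;> simp [h]
    have : (⟨c i ^ 2, sq_nonneg _⟩ : ℝ≥0) = 1 := by ext; simp [h2]
    rw [mul_zero, mul_one]; congr 1

lemma sum_sign {i j : Fin n} (hij : i ≠ j) :
    ∑ ε : Fin n → Bool, ((if ε i then (1:ℝ) else -1) * (if ε j then 1 else -1)) = 0 := by
  apply Finset.sum_ninvolution (fun ε => Function.update ε i (!ε i))
  · intro ε
    rw [Function.update_of_ne hij.symm, Function.update_self]
    cases h : ε i <;> cases h2 : ε j <;> simp [h, h2]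
  · intro ε h heq
    have := congrFun heq i
    rw [Function.update_self] at this
    exact Bool.not_ne_self (ε i) this
  · intro ε; exact Finset.mem_univ _
  · intro ε
    ext k
    by_cases hk : k = i
    · subst hk
      simp
    · simp [Function.update_of_ne hk]

variable {F : Type*} [NormedAddCommGroup F] [NormedSpace ℝ F]

lemma eLpNorm_diag_le (a : Fin n → Fin n → F)
    (g : Fin n → Ω → ℝ) (hmeas : ∀ i, Measurable (g i))
    (hindep : iIndepFun g P)
    (hlaw : ∀ i, Measure.map (g i) P = gaussianReal 0 1) {q : ℝ≥0∞} (hq : 1 ≤ q) :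
    eLpNorm (fun ω => ∑ i, (g i ω ^ 2 - 1) • a i i) q P
      ≤ eLpNorm (fun ω => ∑ i, ∑ j, (g i ω * g j ω - if i = j then (1:ℝ) else 0) • a i j) q P := by
  classical
  set Φ : (Fin n → ℝ) → F :=
    fun x => ∑ i, ∑ j, (x i * x j - if i = j then (1:ℝ) else 0) • a i j with hΦ
  have hΦc : Continuous Φ := by
    refine continuous_finset_sum _ fun i _ => continuous_finset_sum _ fun j _ => ?_
    exact (((continuous_apply i).mul (continuous_apply j)).sub continuous_const).smul
      continuous_const
  set σ : (Fin n → Bool) → Fin n → ℝ := fun ε i => if ε i then 1 else -1 with hσdef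
  have hσ : ∀ ε i, σ ε i = 1 ∨ σ ε i = -1 := by
    intro ε i; by_cases h : ε i <;> simp [hσdef, h]
  -- invariance of the eLpNorm under sign flips
  have hmapX : ∀ (c : Fin n → ℝ), (∀ i, c i = 1 ∨ c i = -1) →
      eLpNorm (fun ω => Φ (fun i => c i * g i ω)) q P
        = eLpNorm Φ q (Measure.pi fun _ => gaussianReal 0 1) := by
    intro c hc
    rw [← map_pi_eq_signed g hmeas hindep hlaw c hc,
      eLpNorm_map_measure hΦc.aestronglyMeasurable
        (measurable_pi_lambda _ fun i => (hmeas i).const_mul _).aemeasurable]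
    rfl
  have hbase : eLpNorm (fun ω => Φ (fun i => g i ω)) q P
      = eLpNorm Φ q (Measure.pi fun _ => gaussianReal 0 1) := by
    rw [← map_pi_eq g hmeas hindep hlaw,
      eLpNorm_map_measure hΦc.aestronglyMeasurable
        (measurable_pi_lambda _ fun i => hmeas i).aemeasurable]
    rfl
  -- the averaging identity
  have hpt : ((2:ℝ)^n) • (fun ω => ∑ i, (g i ω ^ 2 - 1) • a i i)
      = fun ω => ∑ ε : Fin n → Bool, Φ (fun i => σ ε i * g i ω) := by
    funext ω
    have card_eq : (univ : Finset (Fin n → Bool)).card = 2 ^ n := by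
      simp [Finset.card_univ]
    symm
    calc ∑ ε : Fin n → Bool, Φ (fun i => σ ε i * g i ω)
        = ∑ ε : Fin n → Bool, ∑ i, ∑ j,
            ((σ ε i * g i ω) * (σ ε j * g j ω) - if i = j then (1:ℝ) else 0) • a i j := rfl
      _ = ∑ i, ∑ ε : Fin n → Bool, ∑ j,
            ((σ ε i * g i ω) * (σ ε j * g j ω) - if i = j then (1:ℝ) else 0) • a i j :=
          Finset.sum_comm
      _ = ∑ i, ∑ j, ∑ ε : Fin n → Bool,
            ((σ ε i * g i ω) * (σ ε j * g j ω) - if i = j then (1:ℝ) else 0) • a i j :=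
          Finset.sum_congr rfl fun i _ => Finset.sum_comm
      _ = ∑ i, ∑ j, (∑ ε : Fin n → Bool,
            ((σ ε i * g i ω) * (σ ε j * g j ω) - if i = j then (1:ℝ) else 0)) • a i j :=
          Finset.sum_congr rfl fun i _ => Finset.sum_congr rfl fun j _ => Finset.sum_smul.symm
      _ = ∑ i, ∑ j, (if i = j then (((2:ℝ)^n) * (g i ω ^ 2 - 1)) • a i j else 0) := by
          refine Finset.sum_congr rfl fun i _ => Finset.sum_congr rfl fun j _ => ?_
          have hresc : ∑ ε : Fin n → Bool,
              ((σ ε i * g i ω) * (σ ε j * g j ω) - if i = j then (1:ℝ) else 0)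
              = (∑ ε : Fin n → Bool, σ ε i * σ ε j) * (g i ω * g j ω)
                - (2:ℝ)^n * (if i = j then (1:ℝ) else 0) := by
            rw [Finset.sum_sub_distrib, Finset.sum_const, card_eq, nsmul_eq_mul]
            push_cast
            congr 1
            rw [Finset.sum_mul]
            exact Finset.sum_congr rfl fun ε _ => by ring
          rw [hresc]
          by_cases h : i = j
          · subst h
            have hss : ∑ ε : Fin n → Bool, σ ε i * σ ε i = (2:ℝ)^n := by
              have : ∀ ε : Fin n → Bool, σ ε i * σ ε i = (1:ℝ) := fun ε => by
                rcases hσ ε i with h | h <;> rw [h] <;> norm_num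
              rw [Finset.sum_congr rfl fun ε _ => this ε, Finset.sum_const, card_eq,
                nsmul_eq_mul, mul_one]
              push_cast
              ring
            rw [hss, if_pos rfl, if_pos rfl]
            congr 1
            ring
          · rw [sum_sign h, if_neg h, if_neg h]
            simp
      _ = ∑ i, (((2:ℝ)^n) * (g i ω ^ 2 - 1)) • a i i := by
          refine Finset.sum_congr rfl fun i _ => ?_
          rw [Finset.sum_ite_eq univ i (fun j => (((2:ℝ)^n) * (g i ω ^ 2 - 1)) • a i j)]
          simp
      _ = ((2:ℝ)^n) • ∑ i, (g i ω ^ 2 - 1) • a i i := by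
          rw [Finset.smul_sum]
          exact Finset.sum_congr rfl fun i _ => (smul_smul _ _ _).symm
  -- put things together
  have hSmeas : ∀ (c : Fin n → ℝ),
      AEStronglyMeasurable (fun ω => Φ (fun i => c i * g i ω)) P := by
    intro c
    exact hΦc.comp_aestronglyMeasurable
      (measurable_pi_lambda _ fun i => (hmeas i).const_mul _).aestronglyMeasurable
  have hcoe : ((2:ℝ≥0∞)^n) = ((‖((2:ℝ)^n)‖₊ : ℝ≥0∞)) := by
    rw [nnnorm_pow, ENNReal.coe_pow]
    norm_num
  have key : ((2:ℝ≥0∞)^n) * eLpNorm (fun ω => ∑ i, (g i ω ^ 2 - 1) • a i i) q P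
      ≤ ((2:ℝ≥0∞)^n) * eLpNorm (fun ω => Φ (fun i => g i ω)) q P := by
    have h1 : ((2:ℝ≥0∞)^n) * eLpNorm (fun ω => ∑ i, (g i ω ^ 2 - 1) • a i i) q P
        = eLpNorm (((2:ℝ)^n) • (fun ω => ∑ i, (g i ω ^ 2 - 1) • a i i)) q P := by
      rw [eLpNorm_const_smul, hcoe]; rfl
    rw [h1, hpt]
    have hfn : (fun ω => ∑ ε : Fin n → Bool, Φ (fun i => σ ε i * g i ω))
        = ∑ ε : Fin n → Bool, (fun ω => Φ (fun i => σ ε i * g i ω)) := by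
      funext ω; simp
    calc eLpNorm (fun ω => ∑ ε : Fin n → Bool, Φ (fun i => σ ε i * g i ω)) q P
        ≤ ∑ ε : Fin n → Bool, eLpNorm (fun ω => Φ (fun i => σ ε i * g i ω)) q P := by
          rw [hfn]
          exact eLpNorm_sum_le (fun ε _ => hSmeas (σ ε)) hq
      _ = ∑ ε : Fin n → Bool, eLpNorm Φ q (Measure.pi fun _ => gaussianReal 0 1) :=
          Finset.sum_congr rfl fun ε _ => hmapX (σ ε) (hσ ε)
      _ = ((2:ℝ≥0∞)^n) * eLpNorm (fun ω => Φ (fun i => g i ω)) q P := by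
          rw [Finset.sum_const, hbase]
          simp [Finset.card_univ, nsmul_eq_mul]
  have h2n : ((2:ℝ≥0∞)^n) ≠ 0 := pow_ne_zero _ two_ne_zero
  have h2nt : ((2:ℝ≥0∞)^n) ≠ ∞ := ENNReal.pow_ne_top (by norm_num)
  exact (ENNReal.mul_le_mul_iff_right h2n h2nt).mp key

end Stmt14Aux

open Stmt14Aux
open scoped ENNReal NNReal

/-- Lemma 3.1: comparison of the moments of a centered Gaussian quadratic form
with the sum of the moments of its off-diagonal and diagonal parts. -/
theorem stmt_14 :
    ∀ (n : ℕ) (F : Type*) [NormedAddCommGroup F] [NormedSpace ℝ F],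
    ∀ (a : Fin n → Fin n → F), (∀ i j, a i j = a j i) →
    ∀ (Ω : Type*) [MeasurableSpace Ω] (P : Measure Ω) [IsProbabilityMeasure P],
    ∀ (g : Fin n → Ω → ℝ), (∀ i, Measurable (g i)) →
      iIndepFun g P →
      (∀ i, Measure.map (g i) P = gaussianReal 0 1) →
    ∀ p : ℝ, 1 ≤ p →
    ∀ W : ℝ,
      W = (∫ ω, ‖∑ i, ∑ j, (if i = j then 0 else g i ω * g j ω) • a i j‖ ^ p ∂P) ^ (1 / p)
          + (∫ ω, ‖∑ i, (g i ω ^ 2 - 1) • a i i‖ ^ p ∂P) ^ (1 / p) →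
    (1 / 3) * W ≤ (∫ ω, ‖∑ i, ∑ j, (g i ω * g j ω - if i = j then 1 else 0) • a i j‖ ^ p ∂P) ^ (1 / p) ∧ (∫ ω, ‖∑ i, ∑ j, (g i ω * g j ω - if i = j then 1 else 0) • a i j‖ ^ p ∂P) ^ (1 / p) ≤ W := by
  intro n F _ _ a _hsym Ω _ P _ g hmeas hindep hlaw p hp W hW
  classical
  have hp0 : (0:ℝ) < p := lt_of_lt_of_le one_pos hp
  set q : ℝ≥0∞ := ENNReal.ofReal p with hqdef
  have hq0 : q ≠ 0 := ne_of_gt (ENNReal.ofReal_pos.2 hp0)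
  have hqt : q ≠ ∞ := ENNReal.ofReal_ne_top
  have hq1 : (1:ℝ≥0∞) ≤ q := by
    rw [hqdef, ← ENNReal.ofReal_one]
    exact ENNReal.ofReal_le_ofReal hp
  have hqr : q.toReal = p := ENNReal.toReal_ofReal hp0.le
  have h2q0 : (2:ℝ≥0∞) * q ≠ 0 := mul_ne_zero two_ne_zero hq0
  have h2qt : (2:ℝ≥0∞) * q ≠ ∞ := ENNReal.mul_ne_top (by norm_num) hqt
  have hgi : ∀ i, MemLp (g i) ((2:ℝ≥0∞) * q) P := by
    intro i
    have h1 : MemLp id ((2:ℝ≥0∞) * q) (Measure.map (g i) P) := by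
      rw [hlaw i]; exact memℒp_id_gaussian h2q0 h2qt
    exact (memLp_map_measure_iff aestronglyMeasurable_id (hmeas i).aemeasurable).mp h1
  have hqsplit : (1:ℝ≥0∞)/q = 1/((2:ℝ≥0∞)*q) + 1/((2:ℝ≥0∞)*q) := by
    rw [ENNReal.div_add_div_same, one_add_one_eq_two]
    have h := (ENNReal.mul_div_mul_left 1 q two_ne_zero (by norm_num) :
      (2:ℝ≥0∞) * 1 / (2 * q) = 1 / q).symm
    rwa [mul_one] at h
  have hmul : ∀ i j, MemLp (fun ω => g i ω * g j ω) q P := fun i j =>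
    (hgi j).smul (hgi i) (hpqr := ⟨by simpa only [one_div] using hqsplit.symm⟩)
  have hS : MemLp (fun ω => ∑ i, ∑ j,
      (g i ω * g j ω - if i = j then (1:ℝ) else 0) • a i j) q P := by
    refine memLp_finset_sum _ fun i _ => memLp_finset_sum _ fun j _ => ?_
    exact (memLp_top_const (a i j)).smul (((hmul i j).sub (memLp_const _)))
  have hO : MemLp (fun ω => ∑ i, ∑ j,
      (if i = j then (0:ℝ) else g i ω * g j ω) • a i j) q P := by
    refine memLp_finset_sum _ fun i _ => memLp_finset_sum _ fun j _ => ?_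
    by_cases h : i = j
    · simp only [if_pos h, zero_smul]
      exact memLp_const 0
    · simp only [if_neg h]
      exact (memLp_top_const (a i j)).smul (hmul i j)
  have hD : MemLp (fun ω => ∑ i, (g i ω ^ 2 - 1) • a i i) q P := by
    refine memLp_finset_sum _ fun i _ => ?_
    have hsq : MemLp (fun ω => g i ω ^ 2 - 1) q P := by
      have heq : (fun ω => g i ω ^ 2 - (1:ℝ)) = fun ω => g i ω * g i ω - 1 := by
        funext ω; rw [sq]
      rw [heq]
      exact (hmul i i).sub (memLp_const 1)
    exact (memLp_top_const (a i i)).smul hsq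
  have key : ∀ (f : Ω → F), MemLp f q P →
      (∫ ω, ‖f ω‖ ^ p ∂P) ^ (1/p) = (eLpNorm f q P).toReal := by
    intro f hf
    rw [hf.eLpNorm_eq_integral_rpow_norm hq0 hqt,
      ENNReal.toReal_ofReal (Real.rpow_nonneg
        (integral_nonneg fun ω => Real.rpow_nonneg (norm_nonneg _) _) _), hqr, one_div]
  have hSOD : ∀ ω, (∑ i, ∑ j, (g i ω * g j ω - if i = j then (1:ℝ) else 0) • a i j)
      = (∑ i, ∑ j, (if i = j then (0:ℝ) else g i ω * g j ω) • a i j)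
        + ∑ i, (g i ω ^ 2 - 1) • a i i := by
    intro ω
    rw [← Finset.sum_add_distrib]
    refine Finset.sum_congr rfl fun i _ => ?_
    have hco : (g i ω ^ 2 - 1) • a i i
        = ∑ j, (if i = j then (g i ω ^ 2 - 1) • a i i else 0) := by
      rw [Finset.sum_ite_eq univ i (fun _ => (g i ω ^ 2 - 1) • a i i)]
      simp
    rw [hco, ← Finset.sum_add_distrib]
    refine Finset.sum_congr rfl fun j _ => ?_
    by_cases h : i = j
    · subst h
      rw [if_pos rfl, if_pos rfl, if_pos rfl, zero_smul, zero_add]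
      congr 1
      ring
    · rw [if_neg h, if_neg h, if_neg h, add_zero, sub_zero]
  have hup : eLpNorm (fun ω => ∑ i, ∑ j,
        (g i ω * g j ω - if i = j then (1:ℝ) else 0) • a i j) q P
      ≤ eLpNorm (fun ω => ∑ i, ∑ j,
          (if i = j then (0:ℝ) else g i ω * g j ω) • a i j) q P
        + eLpNorm (fun ω => ∑ i, (g i ω ^ 2 - 1) • a i i) q P := by
    have heq : (fun ω => ∑ i, ∑ j, (g i ω * g j ω - if i = j then (1:ℝ) else 0) • a i j)
        = (fun ω => ∑ i, ∑ j, (if i = j then (0:ℝ) else g i ω * g j ω) • a i j)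
          + (fun ω => ∑ i, (g i ω ^ 2 - 1) • a i i) := funext fun ω => hSOD ω
    rw [heq]
    exact eLpNorm_add_le hO.aestronglyMeasurable hD.aestronglyMeasurable hq1
  have hOle : eLpNorm (fun ω => ∑ i, ∑ j,
        (if i = j then (0:ℝ) else g i ω * g j ω) • a i j) q P
      ≤ eLpNorm (fun ω => ∑ i, ∑ j,
          (g i ω * g j ω - if i = j then (1:ℝ) else 0) • a i j) q P
        + eLpNorm (fun ω => ∑ i, (g i ω ^ 2 - 1) • a i i) q P := by
    have heq : (fun ω => ∑ i, ∑ j, (if i = j then (0:ℝ) else g i ω * g j ω) • a i j)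
        = (fun ω => ∑ i, ∑ j, (g i ω * g j ω - if i = j then (1:ℝ) else 0) • a i j)
          - (fun ω => ∑ i, (g i ω ^ 2 - 1) • a i i) :=
      funext fun ω => eq_sub_of_add_eq (hSOD ω).symm
    rw [heq]
    exact eLpNorm_sub_le hS.aestronglyMeasurable hD.aestronglyMeasurable hq1
  have hDle : eLpNorm (fun ω => ∑ i, (g i ω ^ 2 - 1) • a i i) q P
      ≤ eLpNorm (fun ω => ∑ i, ∑ j,
          (g i ω * g j ω - if i = j then (1:ℝ) else 0) • a i j) q P :=
    eLpNorm_diag_le a g hmeas hindep hlaw hq1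
  have hSf := hS.eLpNorm_ne_top
  have hOf := hO.eLpNorm_ne_top
  have hDf := hD.eLpNorm_ne_top
  have eS_eq : (∫ ω, ‖∑ i, ∑ j, (g i ω * g j ω - if i = j then (1:ℝ) else 0) • a i j‖ ^ p ∂P) ^ (1/p)
      = (eLpNorm (fun ω => ∑ i, ∑ j,
          (g i ω * g j ω - if i = j then (1:ℝ) else 0) • a i j) q P).toReal := key _ hS
  have eO_eq : (∫ ω, ‖∑ i, ∑ j, (if i = j then (0:ℝ) else g i ω * g j ω) • a i j‖ ^ p ∂P) ^ (1/p)
      = (eLpNorm (fun ω => ∑ i, ∑ j,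
          (if i = j then (0:ℝ) else g i ω * g j ω) • a i j) q P).toReal := key _ hO
  have eD_eq : (∫ ω, ‖∑ i, (g i ω ^ 2 - 1) • a i i‖ ^ p ∂P) ^ (1/p)
      = (eLpNorm (fun ω => ∑ i, (g i ω ^ 2 - 1) • a i i) q P).toReal := key _ hD
  have hdR : (eLpNorm (fun ω => ∑ i, (g i ω ^ 2 - 1) • a i i) q P).toReal
      ≤ (eLpNorm (fun ω => ∑ i, ∑ j,
          (g i ω * g j ω - if i = j then (1:ℝ) else 0) • a i j) q P).toReal :=
    ENNReal.toReal_mono hSf hDle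
  have hoR : (eLpNorm (fun ω => ∑ i, ∑ j,
        (if i = j then (0:ℝ) else g i ω * g j ω) • a i j) q P).toReal
      ≤ (eLpNorm (fun ω => ∑ i, ∑ j,
          (g i ω * g j ω - if i = j then (1:ℝ) else 0) • a i j) q P).toReal
        + (eLpNorm (fun ω => ∑ i, (g i ω ^ 2 - 1) • a i i) q P).toReal := by
    have := ENNReal.toReal_mono (ENNReal.add_ne_top.mpr ⟨hSf, hDf⟩) hOle
    rwa [ENNReal.toReal_add hSf hDf] at this
  have hsR : (eLpNorm (fun ω => ∑ i, ∑ j,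
        (g i ω * g j ω - if i = j then (1:ℝ) else 0) • a i j) q P).toReal
      ≤ (eLpNorm (fun ω => ∑ i, ∑ j,
          (if i = j then (0:ℝ) else g i ω * g j ω) • a i j) q P).toReal
        + (eLpNorm (fun ω => ∑ i, (g i ω ^ 2 - 1) • a i i) q P).toReal := by
    have := ENNReal.toReal_mono (ENNReal.add_ne_top.mpr ⟨hOf, hDf⟩) hup
    rwa [ENNReal.toReal_add hOf hDf] at this
  constructor
  · rw [eS_eq, hW, eO_eq, eD_eq]
    linarith
  · rw [eS_eq, hW, eO_eq, eD_eq]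
    linarith
end

section
/- There exists a universal constant C > 0 such that for every positive integer n, every real normed space (F, ‖·‖), every symmetric matrix (a_{ij})_{i,j≤n} with entries in F, and every p ≥ 1, one has √p · sup_{‖x‖₂≤1} E‖ Σ_i a_{ii} x_i g_i ‖ ≤ C·( E‖Σ_{ij} a_{ij}(g_i g_j − δ_{ij})‖ + √p · sup_{‖(x_{ij})‖₂≤1} ‖Σ_{ij} a_{ij} x_{ij}‖ + p · sup_{‖x‖₂≤1, ‖y‖₂≤1} ‖Σ_{ij} a_{ij} x_i y_j‖ ). -/
open MeasureTheory ProbabilityTheory Finset Real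
open scoped ENNReal NNReal

lemma aux_sq_exp : ∫ x : ℝ, x ^ 2 * Real.exp (-(2⁻¹:ℝ) * x ^ 2) = Real.sqrt (2 * π) := by
  have hb : (0:ℝ) < 2⁻¹ := by norm_num
  have hu : ∀ x : ℝ, HasDerivAt (fun y : ℝ => y) 1 x := fun x => hasDerivAt_id x
  have hv : ∀ x : ℝ, HasDerivAt (fun y : ℝ => -Real.exp (-(2⁻¹:ℝ) * y ^ 2))
      (x * Real.exp (-(2⁻¹:ℝ) * x ^ 2)) x := by
    intro x
    have h1 : HasDerivAt (fun y : ℝ => -(2⁻¹:ℝ) * y ^ 2) (-(2⁻¹:ℝ) * ((2:ℕ) * x ^ 1)) x :=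
      (hasDerivAt_pow 2 x).const_mul _
    have h2 := h1.exp.neg
    refine HasDerivAt.congr_deriv h2 ?_
    push_cast
    ring
  have huv' : Integrable (fun x : ℝ => x * (x * Real.exp (-(2⁻¹:ℝ) * x ^ 2))) := by
    have h := integrable_rpow_mul_exp_neg_mul_sq hb (by norm_num : (-1:ℝ) < 2)
    have he : (fun x : ℝ => x * (x * Real.exp (-(2⁻¹:ℝ) * x ^ 2)))
        = fun x : ℝ => x ^ (2:ℝ) * Real.exp (-(2⁻¹:ℝ) * x ^ 2) := by
      ext x
      rw [show ((2:ℝ)) = ((2:ℕ):ℝ) by norm_num, Real.rpow_natCast]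
      ring
    rw [he]
    exact h
  have hu'v : Integrable (fun x : ℝ => 1 * -Real.exp (-(2⁻¹:ℝ) * x ^ 2)) := by
    rw [show (fun x : ℝ => 1 * -Real.exp (-(2⁻¹:ℝ) * x ^ 2))
        = (fun x : ℝ => -(Real.exp (-(2⁻¹:ℝ) * x ^ 2))) from funext fun x => by ring]
    exact (integrable_exp_neg_mul_sq hb).neg
  have huv : Integrable (fun x : ℝ => x * -Real.exp (-(2⁻¹:ℝ) * x ^ 2)) := by
    rw [show (fun x : ℝ => x * -Real.exp (-(2⁻¹:ℝ) * x ^ 2))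
        = (fun x : ℝ => -(x * Real.exp (-(2⁻¹:ℝ) * x ^ 2))) from funext fun x => by ring]
    exact (integrable_mul_exp_neg_mul_sq hb).neg
  have key := integral_mul_deriv_eq_deriv_mul_of_integrable (fun x _ => hu x) (fun x _ => hv x) huv' hu'v huv
  have h1 : (∫ x : ℝ, x ^ 2 * Real.exp (-(2⁻¹:ℝ) * x ^ 2))
      = ∫ x : ℝ, x * (x * Real.exp (-(2⁻¹:ℝ) * x ^ 2)) := by
    congr 1; ext x; ring
  rw [h1, key]
  have h2 : (∫ x : ℝ, 1 * -Real.exp (-(2⁻¹:ℝ) * x ^ 2))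
      = - ∫ x : ℝ, Real.exp (-(2⁻¹:ℝ) * x ^ 2) := by
    rw [← integral_neg]; congr 1; ext x; ring
  rw [h2, neg_neg, integral_gaussian]
  norm_num
  ring

lemma aux_pdf_eq : (fun x : ℝ => ((gaussianPDFReal 0 1 x).toNNReal : ℝ) * x ^ 2)
    = fun x : ℝ => (Real.sqrt (2 * π))⁻¹ * (x ^ 2 * Real.exp (-(2⁻¹:ℝ) * x ^ 2)) := by
  ext x
  rw [Real.coe_toNNReal _ (gaussianPDFReal_nonneg _ _ _)]
  simp only [gaussianPDFReal, NNReal.coe_one, mul_one, sub_zero]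
  rw [show -x ^ 2 / 2 = -(2⁻¹:ℝ) * x ^ 2 by ring]
  ring

lemma aux_gauss_density : gaussianReal 0 1
    = volume.withDensity (fun x => ((gaussianPDFReal 0 1 x).toNNReal : ℝ≥0∞)) := by
  rw [gaussianReal_of_var_ne_zero 0 one_ne_zero]
  rfl

lemma aux_second_moment : ∫ x : ℝ, x ^ 2 ∂(gaussianReal 0 1) = 1 := by
  rw [aux_gauss_density,
    integral_withDensity_eq_integral_smul (measurable_gaussianPDFReal 0 1).real_toNNReal]
  have : (fun x : ℝ => (gaussianPDFReal 0 1 x).toNNReal • x ^ 2)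
      = fun x : ℝ => (Real.sqrt (2 * π))⁻¹ * (x ^ 2 * Real.exp (-(2⁻¹:ℝ) * x ^ 2)) := by
    rw [← aux_pdf_eq]; ext x; simp [NNReal.smul_def, smul_eq_mul]
  rw [this, integral_const_mul, aux_sq_exp, inv_mul_cancel₀]
  positivity

lemma aux_integrable_sq : Integrable (fun x : ℝ => x ^ 2) (gaussianReal 0 1) := by
  rw [aux_gauss_density]
  rw [integrable_withDensity_iff_integrable_smul (measurable_gaussianPDFReal 0 1).real_toNNReal]
  have : (fun x : ℝ => (gaussianPDFReal 0 1 x).toNNReal • x ^ 2)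
      = fun x : ℝ => (Real.sqrt (2 * π))⁻¹ * (x ^ 2 * Real.exp (-(2⁻¹:ℝ) * x ^ 2)) := by
    rw [← aux_pdf_eq]; ext x; simp [NNReal.smul_def, smul_eq_mul]
  rw [this]
  refine Integrable.const_mul ?_ _
  have h := integrable_rpow_mul_exp_neg_mul_sq (by norm_num : (0:ℝ) < 2⁻¹)
    (by norm_num : (-1:ℝ) < 2)
  have he : (fun x : ℝ => x ^ 2 * Real.exp (-(2⁻¹:ℝ) * x ^ 2))
      = fun x : ℝ => x ^ (2:ℝ) * Real.exp (-(2⁻¹:ℝ) * x ^ 2) := by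
    ext x
    rw [show ((2:ℝ)) = ((2:ℕ):ℝ) by norm_num, Real.rpow_natCast]
  rw [he]
  exact h

/-- Proposition 4.2: the diagonal term `√p sup_x E‖Σ a_ii x_i g_i‖` is dominated
by the parameters appearing in the main estimates. -/
theorem stmt_16 :
    ∃ C : ℝ, 0 < C ∧
    ∀ (n : ℕ), 0 < n →
    ∀ (F : Type*) [NormedAddCommGroup F] [NormedSpace ℝ F],
    ∀ (a : Fin n → Fin n → F), (∀ i j, a i j = a j i) →
    ∀ (Ω : Type*) [MeasurableSpace Ω] (P : Measure Ω) [IsProbabilityMeasure P],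
    ∀ (g : Fin n → Ω → ℝ), (∀ i, Measurable (g i)) →
      iIndepFun g P →
      (∀ i, Measure.map (g i) P = gaussianReal 0 1) →
    ∀ p : ℝ, 1 ≤ p →
    Real.sqrt p * (⨆ x : {x : Fin n → ℝ // ∑ i, x i ^ 2 ≤ 1},
        ∫ ω, ‖∑ i, (x.1 i * g i ω) • a i i‖ ∂P)
      ≤ C * ((∫ ω, ‖∑ i, ∑ j, (g i ω * g j ω - if i = j then 1 else 0) • a i j‖ ∂P)
             + Real.sqrt p * (⨆ x : {x : Fin n → Fin n → ℝ // ∑ i, ∑ j, x i j ^ 2 ≤ 1},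
            ‖∑ i, ∑ j, x.1 i j • a i j‖)
             + p * (⨆ xy : {xy : (Fin n → ℝ) × (Fin n → ℝ) //
                (∑ i, xy.1 i ^ 2 ≤ 1) ∧ (∑ i, xy.2 i ^ 2 ≤ 1)},
            ‖∑ i, ∑ j, (xy.1.1 i * xy.1.2 j) • a i j‖)) := by
  refine ⟨1, one_pos, ?_⟩
  intro n hn F _ _ a ha Ω _ P _ g hgmeas hindep hgauss p hp
  haveI hne2 : Nonempty {x : Fin n → Fin n → ℝ // ∑ i, ∑ j, x i j ^ 2 ≤ 1} :=
    ⟨⟨0, by simp⟩⟩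
  haveI hne1 : Nonempty {x : Fin n → ℝ // ∑ i, x i ^ 2 ≤ 1} := ⟨⟨0, by simp⟩⟩
  set M := (⨆ x : {x : Fin n → Fin n → ℝ // ∑ i, ∑ j, x i j ^ 2 ≤ 1},
      ‖∑ i, ∑ j, x.1 i j • a i j‖) with hMdef
  -- boundedness of the range defining M
  have hbdd : BddAbove (Set.range fun x : {x : Fin n → Fin n → ℝ // ∑ i, ∑ j, x i j ^ 2 ≤ 1} =>
      ‖∑ i, ∑ j, x.1 i j • a i j‖) := by
    refine ⟨Real.sqrt (∑ q : Fin n × Fin n, ‖a q.1 q.2‖ ^ 2), ?_⟩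
    rintro r ⟨⟨x, hx⟩, rfl⟩
    have h1 : ‖∑ i, ∑ j, x i j • a i j‖ ≤ ∑ i, ∑ j, |x i j| * ‖a i j‖ := by
      refine (norm_sum_le _ _).trans ?_
      refine Finset.sum_le_sum fun i _ => ?_
      refine (norm_sum_le _ _).trans (le_of_eq ?_)
      refine Finset.sum_congr rfl fun j _ => ?_
      rw [norm_smul, Real.norm_eq_abs]
    have h2 : ∑ i, ∑ j, |x i j| * ‖a i j‖
        = ∑ q : Fin n × Fin n, |x q.1 q.2| * ‖a q.1 q.2‖ := by
      rw [Fintype.sum_prod_type]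
    have h3 := Real.sum_mul_le_sqrt_mul_sqrt Finset.univ
      (fun q : Fin n × Fin n => |x q.1 q.2|) (fun q => ‖a q.1 q.2‖)
    have h4 : ∑ q : Fin n × Fin n, |x q.1 q.2| ^ 2 = ∑ i, ∑ j, x i j ^ 2 := by
      rw [Fintype.sum_prod_type]
      exact Finset.sum_congr rfl fun i _ => Finset.sum_congr rfl fun j _ => sq_abs _
    have h5 : Real.sqrt (∑ q : Fin n × Fin n, |x q.1 q.2| ^ 2) ≤ 1 := by
      rw [h4]
      exact Real.sqrt_le_one.mpr hx
    calc ‖∑ i, ∑ j, x i j • a i j‖ ≤ ∑ q : Fin n × Fin n, |x q.1 q.2| * ‖a q.1 q.2‖ := by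
          rw [← h2]; exact h1
      _ ≤ Real.sqrt (∑ q : Fin n × Fin n, |x q.1 q.2| ^ 2)
            * Real.sqrt (∑ q : Fin n × Fin n, ‖a q.1 q.2‖ ^ 2) := h3
      _ ≤ 1 * Real.sqrt (∑ q : Fin n × Fin n, ‖a q.1 q.2‖ ^ 2) := by
          exact mul_le_mul_of_nonneg_right h5 (Real.sqrt_nonneg _)
      _ = Real.sqrt (∑ q : Fin n × Fin n, ‖a q.1 q.2‖ ^ 2) := one_mul _
  have hM0 : 0 ≤ M := Real.iSup_nonneg fun x => norm_nonneg _
  -- integrability and second moment of each g i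
  have hg2 : ∀ i, Integrable (fun ω => g i ω ^ 2) P := by
    intro i
    have h0 : Integrable (fun x : ℝ => x ^ 2) (Measure.map (g i) P) := by
      rw [hgauss i]; exact aux_integrable_sq
    exact (integrable_map_measure ((measurable_id.pow_const 2).aestronglyMeasurable)
      (hgmeas i).aemeasurable).mp h0
  have hmom : ∀ i, ∫ ω, g i ω ^ 2 ∂P = 1 := by
    intro i
    have h0 : ∫ ω, g i ω ^ 2 ∂P = ∫ x, x ^ 2 ∂(Measure.map (g i) P) :=
      (integral_map (hgmeas i).aemeasurable
        ((measurable_id.pow_const 2).aestronglyMeasurable)).symm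
    rw [h0, hgauss i, aux_second_moment]
  -- key bound
  have hkey : ∀ x : Fin n → ℝ, (∑ i, x i ^ 2 ≤ 1) →
      (∫ ω, ‖∑ i, (x i * g i ω) • a i i‖ ∂P) ≤ M := by
    intro x hx
    set q : Ω → ℝ := fun ω => ∑ i, (x i * g i ω) ^ 2 with hqdef
    have hqint : Integrable q P := by
      refine integrable_finset_sum _ fun i _ => ?_
      exact ((hg2 i).const_mul (x i ^ 2)).congr (ae_of_all _ fun ω => by simp [mul_pow])
    have hpt : ∀ ω, ‖∑ i, (x i * g i ω) • a i i‖ ≤ (q ω + 1) / 2 * M := by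
      intro ω
      have hq0 : 0 ≤ q ω := Finset.sum_nonneg fun i _ => sq_nonneg _
      set s := Real.sqrt (q ω) with hsdef
      have h1 : ‖∑ i, (x i * g i ω) • a i i‖ ≤ s * M := by
        rcases eq_or_lt_of_le hq0 with h0 | hpos
        · have hz : ∀ i ∈ Finset.univ, (x i * g i ω) • a i i = (0 : F) := by
            intro i _
            have h2 : (x i * g i ω) ^ 2 = 0 :=
              (Finset.sum_eq_zero_iff_of_nonneg (fun i _ => sq_nonneg _)).mp h0.symm i
                (Finset.mem_univ i)
            rw [pow_eq_zero_iff (by norm_num : (2:ℕ) ≠ 0)] at h2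
            rw [h2, zero_smul]
          rw [Finset.sum_eq_zero hz, norm_zero]
          exact mul_nonneg (Real.sqrt_nonneg _) hM0
        · have hspos : 0 < s := Real.sqrt_pos.mpr hpos
          set y : Fin n → Fin n → ℝ := fun i j => if i = j then (x i * g i ω) / s else 0
            with hydef
          have hysum : ∑ i, ∑ j, y i j ^ 2 ≤ 1 := by
            have hinner : ∀ i, ∑ j, y i j ^ 2 = (x i * g i ω) ^ 2 / s ^ 2 := by
              intro i
              have : ∀ j, y i j ^ 2 = if i = j then (x i * g i ω) ^ 2 / s ^ 2 else 0 := by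
                intro j
                by_cases h : i = j <;> simp [hydef, h, div_pow]
              rw [Finset.sum_congr rfl fun j _ => this j, Finset.sum_ite_eq]
              simp
            have heq : ∑ i, ∑ j, y i j ^ 2 = q ω / s ^ 2 := by
              rw [Finset.sum_congr rfl fun i _ => hinner i, ← Finset.sum_div]
            rw [heq, hsdef, Real.sq_sqrt hq0, div_self (ne_of_gt hpos)]
          have hle : ‖∑ i, ∑ j, y i j • a i j‖ ≤ M :=
            le_ciSup hbdd (⟨y, hysum⟩ : {x : Fin n → Fin n → ℝ // ∑ i, ∑ j, x i j ^ 2 ≤ 1})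
          have hsum : ∑ i, ∑ j, y i j • a i j = s⁻¹ • ∑ i, (x i * g i ω) • a i i := by
            rw [Finset.smul_sum]
            refine Finset.sum_congr rfl fun i _ => ?_
            have : ∀ j, y i j • a i j
                = if i = j then ((x i * g i ω) / s) • a i j else 0 := by
              intro j
              by_cases h : i = j <;> simp [hydef, h]
            rw [Finset.sum_congr rfl fun j _ => this j, Finset.sum_ite_eq]
            simp [smul_smul, div_eq_inv_mul]
          calc ‖∑ i, (x i * g i ω) • a i i‖
              = s * ‖∑ i, ∑ j, y i j • a i j‖ := by
                rw [hsum, norm_smul, norm_inv, Real.norm_eq_abs, abs_of_pos hspos]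
                rw [← mul_assoc, mul_inv_cancel₀ (ne_of_gt hspos), one_mul]
            _ ≤ s * M := mul_le_mul_of_nonneg_left hle (le_of_lt hspos)
      have h2 : s ≤ (q ω + 1) / 2 := by
        rw [hsdef]
        nlinarith [Real.sq_sqrt hq0, Real.sqrt_nonneg (q ω),
          sq_nonneg (Real.sqrt (q ω) - 1)]
      exact h1.trans (mul_le_mul_of_nonneg_right h2 hM0)
    have hint : Integrable (fun ω => (q ω + 1) / 2 * M) P :=
      ((hqint.add (integrable_const 1)).div_const 2).mul_const M
    have hmono := integral_mono_of_nonneg (ae_of_all _ fun ω => norm_nonneg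
      (∑ i, (x i * g i ω) • a i i)) hint (ae_of_all _ hpt)
    have hqi : ∫ ω, q ω ∂P = ∑ i, x i ^ 2 := by
      have hinteach : ∀ i ∈ Finset.univ, Integrable (fun ω => (x i * g i ω) ^ 2) P := by
        intro i _
        exact ((hg2 i).const_mul (x i ^ 2)).congr (ae_of_all _ fun ω => by simp [mul_pow])
      rw [hqdef]
      rw [integral_finset_sum _ hinteach]
      refine Finset.sum_congr rfl fun i _ => ?_
      have : ∫ ω, (x i * g i ω) ^ 2 ∂P = ∫ ω, x i ^ 2 * g i ω ^ 2 ∂P := by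
        refine integral_congr_ae (ae_of_all _ fun ω => by ring)
      rw [this, integral_const_mul, hmom i, mul_one]
    have hval : ∫ ω, (q ω + 1) / 2 * M ∂P = ((∑ i, x i ^ 2) + 1) / 2 * M := by
      rw [integral_mul_const, integral_div, integral_add hqint (integrable_const 1), hqi,
        integral_const]
      simp
    have hfin : ((∑ i, x i ^ 2) + 1) / 2 * M ≤ M := by
      have : ((∑ i, x i ^ 2) + 1) / 2 ≤ 1 := by linarith
      calc ((∑ i, x i ^ 2) + 1) / 2 * M ≤ 1 * M :=
            mul_le_mul_of_nonneg_right this hM0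
        _ = M := one_mul M
    calc (∫ ω, ‖∑ i, (x i * g i ω) • a i i‖ ∂P) ≤ ∫ ω, (q ω + 1) / 2 * M ∂P := hmono
      _ = ((∑ i, x i ^ 2) + 1) / 2 * M := hval
      _ ≤ M := hfin
  -- assemble
  have hS : (⨆ x : {x : Fin n → ℝ // ∑ i, x i ^ 2 ≤ 1},
      ∫ ω, ‖∑ i, (x.1 i * g i ω) • a i i‖ ∂P) ≤ M :=
    ciSup_le fun x => hkey x.1 x.2
  have hT1 : 0 ≤ ∫ ω, ‖∑ i, ∑ j, (g i ω * g j ω - if i = j then 1 else 0) • a i j‖ ∂P :=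
    integral_nonneg fun ω => norm_nonneg _
  have hT3 : 0 ≤ ⨆ xy : {xy : (Fin n → ℝ) × (Fin n → ℝ) //
      (∑ i, xy.1 i ^ 2 ≤ 1) ∧ (∑ i, xy.2 i ^ 2 ≤ 1)},
      ‖∑ i, ∑ j, (xy.1.1 i * xy.1.2 j) • a i j‖ :=
    Real.iSup_nonneg fun xy => norm_nonneg _
  have hp0 : (0:ℝ) ≤ p := le_trans zero_le_one hp
  have hsp : 0 ≤ Real.sqrt p := Real.sqrt_nonneg p
  have hmain : Real.sqrt p * (⨆ x : {x : Fin n → ℝ // ∑ i, x i ^ 2 ≤ 1},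
      ∫ ω, ‖∑ i, (x.1 i * g i ω) • a i i‖ ∂P) ≤ Real.sqrt p * M :=
    mul_le_mul_of_nonneg_left hS hsp
  rw [one_mul]
  have hpt3 : 0 ≤ p * (⨆ xy : {xy : (Fin n → ℝ) × (Fin n → ℝ) //
      (∑ i, xy.1 i ^ 2 ≤ 1) ∧ (∑ i, xy.2 i ^ 2 ≤ 1)},
      ‖∑ i, ∑ j, (xy.1.1 i * xy.1.2 j) • a i j‖) := mul_nonneg hp0 hT3
  linarith
end
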